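/- Let a > 0, λ > 0, C ≥ 0, T_0 < 0, and let f : [T_0, 0) → [0, ∞) be bounded and C¹ with f'(t) ≥ (a/|t|) f(t) - C |t|^{λ - 1} f(t) for all t ∈ [T_0, 0). Then f(t) = 0 for all t ∈ [T_0, 0). -/

import Mathlib

open Set Filter Real

theorem uniqueness_differential_inequality (a lam C T0 : ℝ) (ha : 0 < a) (hlam : 0 < lam)
    (hC : 0 ≤ C) (hT0 : T0 < 0) (f D : ℝ → ℝ)
    (hfpos : ∀ t ∈ Ico T0 (0 : ℝ), 0 ≤ f t)
    (hfbdd : ∃ M, ∀ t ∈ Ico T0 (0 : ℝ), f t ≤ M)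
    (hD : ∀ t ∈ Ico T0 (0 : ℝ), HasDerivAt f (D t) t)
    (hDcont : ContinuousOn D (Ico T0 0))
    (hineq : ∀ t ∈ Ico T0 (0 : ℝ), D t ≥ a / |t| * f t - C * |t| ^ (lam - 1) * f t) :
    ∀ t ∈ Ico T0 (0 : ℝ), f t = 0 := by
  obtain ⟨M, hM⟩ := hfbdd
  set E : ℝ → ℝ := fun t => (-t) ^ a * Real.exp (-(C / lam) * (-t) ^ lam) with hE
  set g : ℝ → ℝ := fun t => f t * E t with hg
  -- derivative of g at points of Ico T0 0
  have hgderiv : ∀ t ∈ Ico T0 (0 : ℝ), HasDerivAt g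
      (D t * E t + f t * ((a * (-t) ^ (a - 1) * (-1)) * Real.exp (-(C / lam) * (-t) ^ lam)
        + (-t) ^ a * (Real.exp (-(C / lam) * (-t) ^ lam) *
          (-(C / lam) * (lam * (-t) ^ (lam - 1) * (-1)))))) t := by
    intro t ht
    have htneg : t < 0 := ht.2
    have hnt : (0 : ℝ) < -t := by linarith
    have hφ : HasDerivAt (fun t : ℝ => (-t) ^ a) (a * (-t) ^ (a - 1) * (-1)) t := by
      have := (Real.hasDerivAt_rpow_const (x := -t) (p := a) (Or.inl hnt.ne')).comp t
        (hasDerivAt_neg t)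
      simpa [Function.comp_def] using this
    have hu : HasDerivAt (fun t : ℝ => -(C / lam) * (-t) ^ lam)
        (-(C / lam) * (lam * (-t) ^ (lam - 1) * (-1))) t := by
      have h1 : HasDerivAt (fun t : ℝ => (-t) ^ lam) (lam * (-t) ^ (lam - 1) * (-1)) t := by
        have := (Real.hasDerivAt_rpow_const (x := -t) (p := lam) (Or.inl hnt.ne')).comp t
          (hasDerivAt_neg t)
        simpa [Function.comp_def] using this
      simpa [mul_assoc] using h1.const_mul (-(C / lam))
    have hψ : HasDerivAt (fun t : ℝ => Real.exp (-(C / lam) * (-t) ^ lam))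
        (Real.exp (-(C / lam) * (-t) ^ lam) * (-(C / lam) * (lam * (-t) ^ (lam - 1) * (-1)))) t :=
      hu.exp
    exact (hD t ht).mul (hφ.mul hψ)
  have hderiv_nonneg : ∀ t ∈ Ico T0 (0 : ℝ),
      0 ≤ D t * E t + f t * ((a * (-t) ^ (a - 1) * (-1)) * Real.exp (-(C / lam) * (-t) ^ lam)
        + (-t) ^ a * (Real.exp (-(C / lam) * (-t) ^ lam) *
          (-(C / lam) * (lam * (-t) ^ (lam - 1) * (-1))))) := by
    intro t ht
    have htneg : t < 0 := ht.2
    have hnt : (0 : ℝ) < -t := by linarith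
    have habs : |t| = -t := abs_of_neg htneg
    have hexp : (0 : ℝ) < Real.exp (-(C / lam) * (-t) ^ lam) := Real.exp_pos _
    have hpow : (0 : ℝ) < (-t) ^ a := Real.rpow_pos_of_pos hnt a
    have hkey : a * (-t) ^ (a - 1) = a / (-t) * (-t) ^ a := by
      rw [Real.rpow_sub hnt, Real.rpow_one]; ring
    have hineqt := hineq t ht
    rw [habs] at hineqt
    have hCs : -(C / lam) * (lam * (-t) ^ (lam - 1) * (-1)) = C * (-t) ^ (lam - 1) := by
      field_simp
    rw [hCs]
    have h1 : D t ≥ a / (-t) * f t - C * (-t) ^ (lam - 1) * f t := hineqt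
    have hEpos : (0 : ℝ) < E t := mul_pos hpow hexp
    have hfnn := hfpos t ht
    -- rewrite the expression as E t * (D t - a/(-t) * f t + C * (-t)^(lam-1) * f t)
    have hexpand : D t * E t + f t * ((a * (-t) ^ (a - 1) * (-1)) *
        Real.exp (-(C / lam) * (-t) ^ lam)
        + (-t) ^ a * (Real.exp (-(C / lam) * (-t) ^ lam) * (C * (-t) ^ (lam - 1))))
        = E t * (D t - a / (-t) * f t + C * (-t) ^ (lam - 1) * f t) := by
      rw [hE]; simp only; rw [hkey]; ring
    rw [hexpand]
    have : 0 ≤ D t - a / (-t) * f t + C * (-t) ^ (lam - 1) * f t := by linarith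
    positivity
  -- g is monotone on Ico T0 0
  have hgmono : MonotoneOn g (Ico T0 0) := by
    apply monotoneOn_of_deriv_nonneg (convex_Ico T0 0)
    · intro t ht
      exact ((hgderiv t ht).continuousAt).continuousWithinAt
    · intro t ht
      rw [interior_Ico] at ht
      exact ((hgderiv t (Ioo_subset_Ico_self ht)).differentiableAt).differentiableWithinAt
    · intro t ht
      rw [interior_Ico] at ht
      rw [(hgderiv t (Ioo_subset_Ico_self ht)).deriv]
      exact hderiv_nonneg t (Ioo_subset_Ico_self ht)
  -- g tends to 0 as t → 0⁻
  have hlim : Tendsto g (nhdsWithin 0 (Iio 0)) (nhds 0) := by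
    have htend : Tendsto (fun s : ℝ => M * (-s) ^ a) (nhdsWithin 0 (Iio 0)) (nhds 0) := by
      have h1 : Tendsto (fun s : ℝ => -s) (nhdsWithin 0 (Iio 0)) (nhds 0) := by
        have := (continuous_neg.tendsto (0 : ℝ)).mono_left
          (nhdsWithin_le_nhds (s := Iio (0:ℝ)))
        simpa using this
      have h2 : Tendsto (fun s : ℝ => (-s) ^ a) (nhdsWithin 0 (Iio 0)) (nhds 0) := by
        have hc : ContinuousAt (fun x : ℝ => x ^ a) 0 :=
          Real.continuousAt_rpow_const 0 a (Or.inr ha.le)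
        have := hc.tendsto.comp h1
        simpa [Real.zero_rpow ha.ne', Function.comp_def] using this
      simpa using h2.const_mul M
    have hbounds : ∀ᶠ s in nhdsWithin 0 (Iio 0), 0 ≤ g s ∧ g s ≤ M * (-s) ^ a := by
      have hmem : Ico T0 (0 : ℝ) ∈ nhdsWithin 0 (Iio 0) := by
        rw [mem_nhdsWithin]
        exact ⟨Ioi T0, isOpen_Ioi, hT0, fun s hs => ⟨le_of_lt hs.1, hs.2⟩⟩
      filter_upwards [hmem] with s hs
      have hsneg : s < 0 := hs.2
      have hns : (0 : ℝ) < -s := by linarith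
      have hpow : (0 : ℝ) ≤ (-s) ^ a := (Real.rpow_pos_of_pos hns a).le
      have hexple : Real.exp (-(C / lam) * (-s) ^ lam) ≤ 1 := by
        apply Real.exp_le_one_iff.mpr
        have : (0 : ℝ) ≤ (C / lam) * (-s) ^ lam := by positivity
        linarith
      have hexppos := Real.exp_pos (-(C / lam) * (-s) ^ lam)
      constructor
      · have := hfpos s hs
        have hEpos : (0 : ℝ) ≤ E s := by positivity
        exact mul_nonneg this hEpos
      · calc g s = f s * ((-s) ^ a * Real.exp (-(C / lam) * (-s) ^ lam)) := rfl
          _ ≤ f s * ((-s) ^ a * 1) := by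
              apply mul_le_mul_of_nonneg_left _ (hfpos s hs)
              exact mul_le_mul_of_nonneg_left hexple hpow
          _ = f s * (-s) ^ a := by ring
          _ ≤ M * (-s) ^ a := mul_le_mul_of_nonneg_right (hM s hs) hpow
    apply tendsto_of_tendsto_of_tendsto_of_le_of_le' tendsto_const_nhds htend
    · exact hbounds.mono fun s h => h.1
    · exact hbounds.mono fun s h => h.2
  -- conclude
  intro t ht
  have htneg : t < 0 := ht.2
  have hnt : (0 : ℝ) < -t := by linarith
  have hgle : g t ≤ 0 := by
    apply ge_of_tendsto hlim
    have hmem : Ioo t (0 : ℝ) ∈ nhdsWithin 0 (Iio 0) := by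
      rw [mem_nhdsWithin]
      exact ⟨Ioi t, isOpen_Ioi, htneg, fun s hs => ⟨hs.1, hs.2⟩⟩
    filter_upwards [hmem] with s hs
    exact hgmono ht ⟨le_trans ht.1 hs.1.le, hs.2⟩ hs.1.le
  have hEpos : (0 : ℝ) < E t :=
    mul_pos (Real.rpow_pos_of_pos hnt a) (Real.exp_pos _)
  have hgnn : 0 ≤ g t := mul_nonneg (hfpos t ht) hEpos.le
  have : g t = 0 := le_antisymm hgle hgnn
  have := mul_eq_zero.mp this
  rcases this with h | h
  · exact h
  · exact absurd h hEpos.ne'
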